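/- Let G be a finite directed graph with integer edge weights. If every primitive cycle has weight ≤ 0 and there exists a primitive cycle of weight < 0 whose edges all occur in a given closed walk σ, then the |σ|-fold repetition of σ has strictly negative weight; consequently σ itself has weight ≤ −1. -/

import Mathlib

/-- A list of edges forms a walk: consecutive edges are compatible. -/
def IsWalk {V E : Type*} (src tgt : E → V) (es : List E) : Prop :=
  es.Chain' (fun e f => tgt e = src f)

/-- A closed walk: a nonempty walk that ends where it starts. -/
def IsClosedWalk {V E : Type*} (src tgt : E → V) (es : List E) : Prop :=
  IsWalk src tgt es ∧ es ≠ [] ∧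
    ∀ h : es ≠ [], tgt (es.getLast h) = src (es.head h)

/-- A primitive (simple) cycle: a closed walk visiting no vertex twice except start/end. -/
def IsPrimitiveCycle {V E : Type*} (src tgt : E → V) (es : List E) : Prop :=
  IsClosedWalk src tgt es ∧ (es.map src).Nodup

/-- The total weight of a walk. -/
def walkWeight {E : Type*} (c : E → ℤ) (es : List E) : ℤ := (es.map c).sum

private lemma getElem_index_congr {α : Type*} (l : List α) {a b : ℕ} (h : a = b)
    (hb : b < l.length) : l[a]'(h ▸ hb) = l[b]'hb := by subst h; rfl

lemma walk_map_tgt {V E : Type*} (src tgt : E → V) :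
    ∀ (es : List E) (h : es ≠ []), IsWalk src tgt es →
      es.map tgt = (es.map src).tail ++ [tgt (es.getLast h)]
  | [e], _, _ => by simp
  | e :: f :: rest, _, hw => by
    obtain ⟨h1, h2⟩ := List.isChain_cons_cons.mp hw
    have ih := walk_map_tgt src tgt (f :: rest) (by simp) h2
    simp only [List.map_cons, List.tail_cons] at ih ⊢
    rw [ih, h1, List.getLast_cons_cons]
    simp

lemma closed_perm {V E : Type*} {src tgt : E → V} {es : List E}
    (h : IsClosedWalk src tgt es) : (es.map tgt).Perm (es.map src) := by
  obtain ⟨hw, hne, hcl⟩ := h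
  rw [walk_map_tgt src tgt es hne hw, hcl hne]
  have hmne : es.map src ≠ [] := by simp [hne]
  have hhead : src (es.head hne) = (es.map src).head hmne := (List.head_map _).symm
  rw [hhead]
  refine List.Perm.trans List.perm_append_comm ?_
  rw [List.singleton_append, List.cons_head_tail]

lemma closed_of_dup {V E : Type*} {src tgt : E → V} {es : List E}
    (hw : IsWalk src tgt es) (hdup : ¬ (es.map src).Nodup) :
    ∃ seg : List E, IsClosedWalk src tgt seg ∧ seg.length < es.length ∧ ∀ e ∈ seg, e ∈ es := by
  rw [List.Nodup, List.pairwise_iff_getElem] at hdup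
  push_neg at hdup
  obtain ⟨i, j, hi, hj, hij, heq⟩ := hdup
  rw [List.length_map] at hi hj
  rw [List.getElem_map, List.getElem_map] at heq
  have hlen : ((es.drop i).take (j - i)).length = j - i := by
    rw [List.length_take, List.length_drop]; omega
  refine ⟨(es.drop i).take (j - i), ⟨?_, ?_, ?_⟩, ?_, ?_⟩
  · exact hw.infix ((List.take_prefix _ _).isInfix.trans (List.drop_suffix i es).isInfix)
  · intro h
    rw [h] at hlen; simp at hlen; omega
  · intro h
    have hlast : ((es.drop i).take (j - i)).getLast h = es[j-1]'(by omega) := by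
      rw [List.getLast_eq_getElem, List.getElem_take, List.getElem_drop]
      apply getElem_index_congr
      simp only [List.length_take, List.length_drop]
      omega
    have hhead : ((es.drop i).take (j - i)).head h = es[i] := by
      rw [List.head_eq_getElem_zero, List.getElem_take, List.getElem_drop]
      apply getElem_index_congr
      omega
    rw [hlast, hhead, heq]
    have h2 := List.isChain_iff_getElem.mp hw (j-1) (by omega)
    rw [h2]
    congr 1
    apply getElem_index_congr
    omega
  · omega
  · intro e he
    exact List.mem_of_mem_drop (List.mem_of_mem_take he)

lemma prim_of_closed {V E : Type*} {src tgt : E → V} (n : ℕ) :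
    ∀ es : List E, es.length ≤ n → IsClosedWalk src tgt es →
      ∃ p, IsPrimitiveCycle src tgt p ∧ ∀ e ∈ p, e ∈ es := by
  induction n with
  | zero =>
    intro es hlen h
    exact absurd (List.eq_nil_of_length_eq_zero (Nat.le_zero.mp hlen)) h.2.1
  | succ n ih =>
    intro es hlen h
    by_cases hdup : (es.map src).Nodup
    · exact ⟨es, ⟨h, hdup⟩, fun _ he => he⟩
    · obtain ⟨seg, hseg, hlt, hsub⟩ := closed_of_dup h.1 hdup
      obtain ⟨p, hp, hps⟩ := ih seg (by omega) hseg
      exact ⟨p, hp, fun e he => hsub e (hps e he)⟩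

lemma exists_prim {V E : Type*} [Fintype V] {src tgt : E → V} (M : Multiset E)
    (hM : M ≠ 0) (hbal : M.map src = M.map tgt) :
    ∃ p, IsPrimitiveCycle src tgt p ∧ ∀ e ∈ p, e ∈ M := by
  have hstep : ∀ e ∈ M, ∃ f ∈ M, src f = tgt e := by
    intro e he
    have : tgt e ∈ M.map src := by
      rw [hbal]; exact Multiset.mem_map_of_mem _ he
    exact Multiset.mem_map.mp this
  obtain ⟨e₀, he₀⟩ := Multiset.exists_mem_of_ne_zero hM
  have hwalk : ∀ n : ℕ, ∃ es : List E, IsWalk src tgt es ∧ es.length = n + 1 ∧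
      (∀ e ∈ es, e ∈ M) := by
    intro n
    induction n with
    | zero => exact ⟨[e₀], List.isChain_singleton _, rfl, by simpa using he₀⟩
    | succ n ih =>
      obtain ⟨es, hw, hlen, hmem⟩ := ih
      have hne : es ≠ [] := by intro h; simp [h] at hlen
      obtain ⟨f, hf, hfe⟩ := hstep (es.getLast hne) (hmem _ (List.getLast_mem hne))
      refine ⟨es ++ [f], ?_, by simp [hlen], ?_⟩
      · rw [IsWalk, List.Chain', List.isChain_append]
        refine ⟨hw, List.isChain_singleton _, ?_⟩
        intro x hx y hy
        rw [List.getLast?_eq_getLast_of_ne_nil hne, Option.mem_def, Option.some_inj] at hx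
        rw [List.head?_cons, Option.mem_def, Option.some_inj] at hy
        subst hx; subst hy; exact hfe.symm
      · intro e he
        rcases List.mem_append.mp he with h | h
        · exact hmem e h
        · rw [List.mem_singleton] at h; subst h; exact hf
  obtain ⟨es, hw, hlen, hmem⟩ := hwalk (Fintype.card V)
  have hdup : ¬ (es.map src).Nodup := by
    intro hnd
    have := hnd.length_le_card
    rw [List.length_map, hlen] at this
    omega
  obtain ⟨seg, hseg, _, hsub⟩ := closed_of_dup hw hdup
  obtain ⟨p, hp, hps⟩ := prim_of_closed seg.length seg le_rfl hseg
  exact ⟨p, hp, fun e he => hmem _ (hsub _ (hps e he))⟩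

lemma coe_balanced {V E : Type*} {src tgt : E → V} {es : List E}
    (h : IsClosedWalk src tgt es) :
    (es : Multiset E).map src = (es : Multiset E).map tgt := by
  rw [Multiset.map_coe, Multiset.map_coe]
  exact (Multiset.coe_eq_coe.mpr (closed_perm h)).symm

lemma balanced_nonpos {V E : Type*} [Fintype V] {src tgt : E → V} {c : E → ℤ}
    (hprim : ∀ es : List E, IsPrimitiveCycle src tgt es → walkWeight c es ≤ 0) (n : ℕ) :
    ∀ M : Multiset E, Multiset.card M ≤ n → M.map src = M.map tgt → (M.map c).sum ≤ 0 := by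
  classical
  induction n with
  | zero =>
    intro M h _
    rw [Multiset.card_eq_zero.mp (Nat.le_zero.mp h)]
    simp
  | succ n ih =>
    intro M hcard hbal
    by_cases hM : M = 0
    · simp [hM]
    · obtain ⟨p, hp, hps⟩ := exists_prim M hM hbal
      have hpnodup : p.Nodup := List.Nodup.of_map src hp.2
      have hle : (↑p : Multiset E) ≤ M := by
        rw [Multiset.le_iff_count]
        intro e
        by_cases he : e ∈ p
        · rw [Multiset.coe_count, List.count_eq_one_of_mem hpnodup he]
          exact Multiset.one_le_count_iff_mem.mpr (hps e he)
        · rw [Multiset.count_eq_zero_of_notMem (by simpa using he)]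
          exact Nat.zero_le _
      obtain ⟨K, hK⟩ := Multiset.le_iff_exists_add.mp hle
      have hpne : p ≠ [] := hp.1.2.1
      have hcardK : Multiset.card K ≤ n := by
        have := congrArg Multiset.card hK
        rw [Multiset.card_add, Multiset.coe_card] at this
        have hlp : 1 ≤ p.length := List.length_pos_iff.mpr hpne
        omega
      have hbalK : K.map src = K.map tgt := by
        have h1 := hbal
        rw [hK, Multiset.map_add, Multiset.map_add, coe_balanced hp.1] at h1
        exact add_left_cancel h1
      have hKle := ih K hcardK hbalK
      have hpw : ((↑p : Multiset E).map c).sum ≤ 0 := by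
        rw [Multiset.map_coe, Multiset.sum_coe]
        exact hprim p hp
      rw [hK, Multiset.map_add, Multiset.sum_add]
      omega

lemma walkWeight_flatten_replicate {E : Type*} (c : E → ℤ) (n : ℕ) (l : List E) :
    walkWeight c ((List.replicate n l).flatten) = n * walkWeight c l := by
  induction n with
  | zero => simp [walkWeight]
  | succ n ih =>
    rw [List.replicate_succ, List.flatten_cons]
    simp only [walkWeight, List.map_append, List.sum_append] at ih ⊢
    rw [ih]
    push_cast
    ring

theorem closed_walk_weight_neg' {V E : Type*} [Fintype V]
    (src tgt : E → V) (c : E → ℤ)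
    (hprim : ∀ es : List E, IsPrimitiveCycle src tgt es → walkWeight c es ≤ 0)
    (σ : List E) (hσ : IsClosedWalk src tgt σ)
    (σ' : List E) (hσ' : IsPrimitiveCycle src tgt σ')
    (hneg : walkWeight c σ' < 0)
    (hsub : ∀ e ∈ σ', e ∈ σ) :
    walkWeight c ((List.replicate σ.length σ).flatten) < 0 ∧ walkWeight c σ ≤ -1 := by
  classical
  set N := σ.length with hN
  have hNpos : 0 < N := List.length_pos_iff.mpr hσ.2.1
  have hnd : σ'.Nodup := List.Nodup.of_map src hσ'.2
  have hle : (↑σ' : Multiset E) ≤ N • (↑σ : Multiset E) := by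
    rw [Multiset.le_iff_count]
    intro e
    by_cases he : e ∈ σ'
    · rw [Multiset.coe_count, List.count_eq_one_of_mem hnd he, Multiset.count_nsmul]
      have h2 : 1 ≤ (↑σ : Multiset E).count e :=
        Multiset.one_le_count_iff_mem.mpr (by simpa using hsub e he)
      calc 1 = 1 * 1 := (one_mul 1).symm
        _ ≤ N * (↑σ : Multiset E).count e := Nat.mul_le_mul hNpos h2
    · rw [Multiset.count_eq_zero_of_notMem (by simpa using he)]
      exact Nat.zero_le _
  obtain ⟨K, hK⟩ := Multiset.le_iff_exists_add.mp hle
  have hbK : K.map src = K.map tgt := by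
    have h1 : ((N • (↑σ : Multiset E)).map src) = ((N • (↑σ : Multiset E)).map tgt) := by
      rw [Multiset.map_nsmul, Multiset.map_nsmul, coe_balanced hσ]
    rw [hK, Multiset.map_add, Multiset.map_add, coe_balanced hσ'.1] at h1
    exact add_left_cancel h1
  have hKw : (K.map c).sum ≤ 0 := balanced_nonpos hprim (Multiset.card K) K le_rfl hbK
  have hsum : (N : ℤ) * walkWeight c σ = walkWeight c σ' + (K.map c).sum := by
    have h1 := congrArg (fun M : Multiset E => (M.map c).sum) hK
    simp only [Multiset.map_nsmul, Multiset.map_add, Multiset.sum_add, Multiset.sum_nsmul,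
      Multiset.map_coe, Multiset.sum_coe] at h1
    rw [nsmul_eq_mul] at h1
    exact h1
  have hmain : (N : ℤ) * walkWeight c σ < 0 := by
    rw [hsum]; omega
  have hwσ : walkWeight c σ ≤ -1 := by
    by_contra hcon
    push_neg at hcon
    have h0 : 0 ≤ walkWeight c σ := by omega
    have : 0 ≤ (N : ℤ) * walkWeight c σ := mul_nonneg (by positivity) h0
    omega
  refine ⟨?_, hwσ⟩
  rw [walkWeight_flatten_replicate]
  exact hmain

/-- If every primitive cycle has weight ≤ 0 and some primitive cycle of weight < 0 has all
its edges occurring in the closed walk σ, then the |σ|-fold repetition of σ has strictly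
negative weight; consequently σ has weight ≤ -1. -/
theorem closed_walk_weight_neg {V E : Type*} [Fintype V]
    (src tgt : E → V) (c : E → ℤ)
    (hprim : ∀ es : List E, IsPrimitiveCycle src tgt es → walkWeight c es ≤ 0)
    (σ : List E) (hσ : IsClosedWalk src tgt σ)
    (σ' : List E) (hσ' : IsPrimitiveCycle src tgt σ')
    (hneg : walkWeight c σ' < 0)
    (hsub : ∀ e ∈ σ', e ∈ σ) :
    walkWeight c ((List.replicate σ.length σ).flatten) < 0 ∧ walkWeight c σ ≤ -1 := by
  exact closed_walk_weight_neg' src tgt c hprim σ hσ σ' hσ' hneg hsub
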